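/- arXiv:1401.2185 — 6 statements merged into one kernel-verified Lean document; each statement's English description precedes it below -/
import Mathlib

section
/- Let I be a nonempty finite index set. For each i ∈ I let S_i be a nonempty finite state space, A_i a nonempty finite action set, c_i : S_i → A_i → ℝ a stage cost, and ρ_i : S_i → A_i → S_i → ℝ transition probabilities satisfying ρ_i s a s' ≥ 0 for all s, a, s' and ∑_{s' ∈ S_i} ρ_i s a s' = 1 for all s, a. Let δ be a discount factor with 0 ≤ δ < 1. Suppose for each i ∈ I the function V_i : S_i → ℝ satisfies the per-entity Bellman equation V_i s = min_{a ∈ A_i} [(1 − δ)·c_i s a + δ·∑_{s' ∈ S_i} ρ_i s a s' · V_i s'] for all s ∈ S_i. Then the function V : (∏_{i ∈ I} S_i) → ℝ defined by V s = ∑_{i ∈ I} V_i (s i) satisfies the joint Bellman equation: for all s ∈ ∏_{i ∈ I} S_i, V s = min_{a ∈ ∏_{i ∈ I} A_i} [(1 − δ)·∑_{i ∈ I} c_i (s i) (a i) + δ·∑_{s' ∈ ∏_{i ∈ I} S_i} (∏_{i ∈ I} ρ_i (s i) (a i) (s' i)) · V s']. -/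
/-- Separable minimization over a product: the inf' of a sum of coordinatewise
functions equals the sum of the coordinatewise inf's. -/
lemma inf'_sum_pi (I : Type*) [Fintype I] [Nonempty I] [DecidableEq I]
    (A : I → Type*) [∀ i, Fintype (A i)] [∀ i, Nonempty (A i)]
    (F : ∀ i, A i → ℝ) :
    (Finset.univ.inf' Finset.univ_nonempty (fun a : ∀ i, A i => ∑ i, F i (a i)))
      = ∑ i, Finset.univ.inf' Finset.univ_nonempty (F i) := by
  apply le_antisymm
  · choose a ha using fun i =>
      Finset.exists_mem_eq_inf' (s := (Finset.univ : Finset (A i)))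
        Finset.univ_nonempty (F i)
    calc Finset.univ.inf' Finset.univ_nonempty (fun b : ∀ i, A i => ∑ i, F i (b i))
        ≤ ∑ i, F i (a i) := Finset.inf'_le _ (Finset.mem_univ a)
      _ = ∑ i, Finset.univ.inf' Finset.univ_nonempty (F i) := by
          refine Finset.sum_congr rfl fun i _ => ((ha i).2).symm
  · apply Finset.le_inf'
    intro b _
    exact Finset.sum_le_sum fun i _ => Finset.inf'_le _ (Finset.mem_univ (b i))

/-- Lemma 1 (decomposition): with additively separable stage costs and a product
transition kernel, the sum of per-entity Bellman fixed points satisfies the joint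
Bellman equation on the product state/action spaces. -/
theorem stmt_0 (I : Type*) [Fintype I] [Nonempty I] [DecidableEq I]
    (S A : I → Type*) [∀ i, Fintype (S i)] [∀ i, Nonempty (S i)]
    [∀ i, Fintype (A i)] [∀ i, Nonempty (A i)]
    (c : ∀ i, S i → A i → ℝ) (ρ : ∀ i, S i → A i → S i → ℝ)
    (hρ0 : ∀ i (s : S i) (a : A i) (s' : S i), 0 ≤ ρ i s a s')
    (hρ1 : ∀ i (s : S i) (a : A i), ∑ s', ρ i s a s' = 1)
    (δ : ℝ) (hδ0 : 0 ≤ δ) (hδ1 : δ < 1)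
    (V : ∀ i, S i → ℝ)
    (hV : ∀ i (s : S i), V i s = Finset.univ.inf' Finset.univ_nonempty
      (fun a : A i => (1 - δ) * c i s a + δ * ∑ s', ρ i s a s' * V i s')) :
    ∀ s : ∀ i, S i,
      (∑ i, V i (s i)) = Finset.univ.inf' Finset.univ_nonempty
        (fun a : ∀ i, A i =>
          (1 - δ) * (∑ i, c i (s i) (a i))
            + δ * ∑ s' : ∀ i, S i, (∏ i, ρ i (s i) (a i) (s' i)) * ∑ i, V i (s' i)) := by
  intro s
  -- Step 1: rewrite the joint objective as a separable sum.
  have key : ∀ a : ∀ i, A i,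
      (1 - δ) * (∑ i, c i (s i) (a i))
        + δ * ∑ s' : ∀ i, S i, (∏ i, ρ i (s i) (a i) (s' i)) * ∑ i, V i (s' i)
      = ∑ i, ((1 - δ) * c i (s i) (a i) + δ * ∑ s', ρ i (s i) (a i) s' * V i s') := by
    intro a
    have expand : ∑ s' : ∀ i, S i, (∏ i, ρ i (s i) (a i) (s' i)) * ∑ i, V i (s' i)
        = ∑ j, ∑ x : S j, ρ j (s j) (a j) x * V j x := by
      rw [Finset.sum_congr rfl (fun s' _ => Finset.mul_sum _ _ _), Finset.sum_comm]
      refine Finset.sum_congr rfl fun j _ => ?_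
      -- ∑_{s'} (∏ ρ) * V_j(s'_j) = ∑_x ρ_j x * V_j x
      have hfact : ∀ s' : ∀ i, S i,
          (∏ i, ρ i (s i) (a i) (s' i)) * V j (s' j)
            = ∏ i, (ρ i (s i) (a i) (s' i) *
                if h : i = j then V j (h ▸ s' i) else 1) := by
        intro s'
        rw [Finset.prod_mul_distrib]
        congr 1
        rw [Finset.prod_eq_single j (fun i _ hij => by simp [hij]) (by simp)]
        simp
      rw [Finset.sum_congr rfl fun s' _ => hfact s',
        ← Fintype.prod_sum (f := fun (i : I) (x : S i) =>
            ρ i (s i) (a i) x * if h : i = j then V j (h ▸ x) else 1)]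
      rw [Finset.prod_eq_single j ?_ (by simp)]
      · simp
      · intro i _ hij
        simp only [dif_neg hij, mul_one]
        exact hρ1 i (s i) (a i)
    rw [expand, Finset.mul_sum, Finset.mul_sum, ← Finset.sum_add_distrib]
  rw [Finset.inf'_congr Finset.univ_nonempty rfl (fun a _ => key a),
    inf'_sum_pi I A (fun i b => (1 - δ) * c i (s i) b + δ * ∑ s', ρ i (s i) b s' * V i s')]
  exact Finset.sum_congr rfl fun i _ => hV i (s i)
end

section
/- Let G be a nonempty finite index set of generators. For each g ∈ G let E_g be a nonempty finite set of generation-cost states, A_g a nonempty finite subset of ℝ of production levels, c_g : E_g → A_g → ℝ a generation cost, and ρ_g : E_g → A_g → E_g → ℝ transition probabilities satisfying ρ_g ε a ε' ≥ 0 for all ε, a, ε' and ∑_{ε' ∈ E_g} ρ_g ε a ε' = 1 for all ε, a. Let δ satisfy 0 ≤ δ < 1 and let y : G → ℝ be a vector of conjectured prices. Suppose for each g ∈ G the function V_g : E_g → ℝ satisfies V_g ε = min_{a ∈ A_g} [(1 − δ)·(c_g ε a + y g · a) + δ·∑_{ε' ∈ E_g} ρ_g ε a ε' · V_g ε'] for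 all ε ∈ E_g. Then the function V_0 : (∏_{g ∈ G} E_g) → ℝ defined by V_0 ε = ∑_{g ∈ G} V_g (ε g) satisfies, for all ε ∈ ∏_{g ∈ G} E_g, V_0 ε = min_{a ∈ ∏_{g ∈ G} A_g} [(1 − δ)·(∑_{g ∈ G} c_g (ε g) (a g) + ∑_{g ∈ G} y g · a g) + δ·∑_{ε' ∈ ∏_{g ∈ G} E_g} (∏_{g ∈ G} ρ_g (ε g) (a g) (ε' g)) · V_0 ε']. -/
set_option maxHeartbeats 1000000

/-- Marginalization: summing a product measure against a function of one
coordinate reduces to the sum over that coordinate. -/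
lemma pi_sum_factor {G : Type*} [Fintype G] [DecidableEq G]
    (E : G → Type*) [∀ g, Fintype (E g)]
    (r : ∀ g, E g → ℝ) (hr : ∀ g, ∑ e, r g e = 1)
    (g₀ : G) (v : E g₀ → ℝ) :
    (∑ ε : ∀ g, E g, (∏ g, r g (ε g)) * v (ε g₀)) = ∑ e, r g₀ e * v e := by
  have h1 : ∀ ε : ∀ g, E g,
      (∏ g, r g (ε g)) * v (ε g₀)
        = ∏ g, (r g (ε g) * if h : g = g₀ then v (h ▸ ε g) else 1) := by
    intro ε
    rw [Finset.prod_mul_distrib]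
    congr 1
    rw [Finset.prod_eq_single g₀ (fun b _ hb => by simp [hb]) (by simp)]
    simp
  calc (∑ ε : ∀ g, E g, (∏ g, r g (ε g)) * v (ε g₀))
      = ∑ ε : ∀ g, E g, ∏ g, (r g (ε g) * if h : g = g₀ then v (h ▸ ε g) else 1) :=
        Finset.sum_congr rfl fun ε _ => h1 ε
    _ = ∏ g, ∑ e, (r g e * if h : g = g₀ then v (h ▸ e) else 1) :=
        (Fintype.prod_sum fun g e => r g e * if h : g = g₀ then v (h ▸ e) else 1).symm
    _ = ∑ e, r g₀ e * v e := by
        rw [Finset.prod_eq_single g₀ (fun b _ hb => by simp [hb, hr]) (by simp)]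
        simp

/-- Sum of inf's equals inf over the product of sums, for finite nonempty types. -/
lemma sum_inf'_pi {G : Type*} [Fintype G] [DecidableEq G] [Nonempty G]
    (A : G → Type*) [∀ g, Fintype (A g)] [∀ g, Nonempty (A g)]
    (f : ∀ g, A g → ℝ) :
    (∑ g, Finset.univ.inf' Finset.univ_nonempty (f g)) =
      Finset.univ.inf' Finset.univ_nonempty (fun a : ∀ g, A g => ∑ g, f g (a g)) := by
  apply le_antisymm
  · apply Finset.le_inf'
    intro a _
    apply Finset.sum_le_sum
    intro g _
    exact Finset.inf'_le _ (Finset.mem_univ (a g))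
  · choose b hb hfb using fun g =>
      Finset.exists_mem_eq_inf' (Finset.univ_nonempty (α := A g)) (f g)
    calc Finset.univ.inf' Finset.univ_nonempty (fun a : ∀ g, A g => ∑ g, f g (a g))
        ≤ ∑ g, f g (b g) := Finset.inf'_le _ (Finset.mem_univ b)
      _ = ∑ g, Finset.univ.inf' Finset.univ_nonempty (f g) :=
          Finset.sum_congr rfl fun g _ => (hfb g).symm

/-- Theorem 2: the ISO's dynamic program, with total generation cost plus a
price term linear in production levels, decomposes across generators. -/
theorem stmt_1 (G : Type*) [Fintype G] [Nonempty G] [DecidableEq G]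
    (E : G → Type*) [∀ g, Fintype (E g)] [∀ g, Nonempty (E g)]
    (A : G → Set ℝ) [∀ g, Fintype (A g)] [∀ g, Nonempty (A g)]
    (c : ∀ g, E g → A g → ℝ) (ρ : ∀ g, E g → A g → E g → ℝ)
    (hρ0 : ∀ g (ε : E g) (a : A g) (ε' : E g), 0 ≤ ρ g ε a ε')
    (hρ1 : ∀ g (ε : E g) (a : A g), ∑ ε', ρ g ε a ε' = 1)
    (δ : ℝ) (hδ0 : 0 ≤ δ) (hδ1 : δ < 1)
    (y : G → ℝ)
    (V : ∀ g, E g → ℝ)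
    (hV : ∀ g (ε : E g), V g ε = Finset.univ.inf' Finset.univ_nonempty
      (fun a : A g => (1 - δ) * (c g ε a + y g * (a : ℝ))
        + δ * ∑ ε', ρ g ε a ε' * V g ε')) :
    ∀ ε : ∀ g, E g,
      (∑ g, V g (ε g)) = Finset.univ.inf' Finset.univ_nonempty
        (fun a : ∀ g, A g =>
          (1 - δ) * ((∑ g, c g (ε g) (a g)) + ∑ g, y g * ((a g : ℝ)))
            + δ * ∑ ε' : ∀ g, E g,
                (∏ g, ρ g (ε g) (a g) (ε' g)) * ∑ g, V g (ε' g)) := by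
  intro ε
  set f : ∀ g, A g → ℝ := fun g a =>
    (1 - δ) * (c g (ε g) a + y g * (a : ℝ)) + δ * ∑ ε', ρ g (ε g) a ε' * V g ε' with hf
  have key : ∀ a : ∀ g, A g,
      (1 - δ) * ((∑ g, c g (ε g) (a g)) + ∑ g, y g * ((a g : ℝ)))
        + δ * ∑ ε' : ∀ g, E g, (∏ g, ρ g (ε g) (a g) (ε' g)) * ∑ g, V g (ε' g)
      = ∑ g, f g (a g) := by
    intro a
    have h2 : (∑ ε' : ∀ g, E g, (∏ g, ρ g (ε g) (a g) (ε' g)) * ∑ g, V g (ε' g))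
        = ∑ g₀, ∑ e, ρ g₀ (ε g₀) (a g₀) e * V g₀ e := by
      calc (∑ ε' : ∀ g, E g, (∏ g, ρ g (ε g) (a g) (ε' g)) * ∑ g, V g (ε' g))
          = ∑ ε' : ∀ g, E g, ∑ g₀, (∏ g, ρ g (ε g) (a g) (ε' g)) * V g₀ (ε' g₀) :=
            Finset.sum_congr rfl fun ε' _ => Finset.mul_sum _ _ _
        _ = ∑ g₀, ∑ ε' : ∀ g, E g, (∏ g, ρ g (ε g) (a g) (ε' g)) * V g₀ (ε' g₀) :=
            Finset.sum_comm
        _ = ∑ g₀, ∑ e, ρ g₀ (ε g₀) (a g₀) e * V g₀ e :=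
            Finset.sum_congr rfl fun g₀ _ =>
              pi_sum_factor E (fun g => ρ g (ε g) (a g))
                (fun g => hρ1 g (ε g) (a g)) g₀ (V g₀)
    rw [h2, hf]
    simp only [Finset.sum_add_distrib, ← Finset.mul_sum]
  have hmin := sum_inf'_pi (fun g => ↥(A g)) f
  have hsum : (∑ g, V g (ε g)) = ∑ g, Finset.univ.inf' Finset.univ_nonempty (f g) :=
    Finset.sum_congr rfl fun g _ => hV g (ε g)
  rw [hsum, hmin]
  exact Finset.inf'_congr _ rfl fun a _ => (key a).symm
end

section
/- Let S be a nonempty finite state space, A a nonempty finite action set, N a natural number, c : S → A → ℝ a stage cost, f : S → A → (Fin N → ℝ) a constraint function, δ a discount factor with 0 ≤ δ < 1, and ρ : S → A → S → ℝ transition probabilities satisfying ρ s a s' ≥ 0 for all s, a, s' and ∑_{s' ∈ S} ρ s a s' = 1 for all s, a. For λ ∈ Fin N → ℝ, say that V : S → ℝ is a λ-penalized value function if V s = max_{a ∈ A} [(1 − δ)·(c s a + ∑_{n} λ n · f s a n) + δ·∑_{s' ∈ S} ρ s a s' · V s'] for all s. If λ₁, λ₂ ∈ Fin N → ℝ, t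 ∈ ℝ with 0 ≤ t ≤ 1, and V₁, V₂, V₃ : S → ℝ are λ₁-, λ₂-, and (t • λ₁ + (1 − t) • λ₂)-penalized value functions respectively, then V₃ s ≤ t·V₁ s + (1 − t)·V₂ s for all s ∈ S. -/
/-- The optimal Lagrangian-penalized value function is convex in the multiplier
vector λ. -/
theorem stmt_9 (S A : Type*) [Fintype S] [Nonempty S] [Fintype A] [Nonempty A]
    (N : ℕ) (c : S → A → ℝ) (f : S → A → Fin N → ℝ)
    (δ : ℝ) (hδ0 : 0 ≤ δ) (hδ1 : δ < 1)
    (ρ : S → A → S → ℝ)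
    (hρ0 : ∀ s a s', 0 ≤ ρ s a s') (hρ1 : ∀ s a, ∑ s', ρ s a s' = 1)
    (lam₁ lam₂ : Fin N → ℝ) (t : ℝ) (ht0 : 0 ≤ t) (ht1 : t ≤ 1)
    (V₁ V₂ V₃ : S → ℝ)
    (h₁ : ∀ s, V₁ s = Finset.univ.sup' Finset.univ_nonempty
      (fun a : A => (1 - δ) * (c s a + ∑ n, lam₁ n * f s a n)
        + δ * ∑ s', ρ s a s' * V₁ s'))
    (h₂ : ∀ s, V₂ s = Finset.univ.sup' Finset.univ_nonempty
      (fun a : A => (1 - δ) * (c s a + ∑ n, lam₂ n * f s a n)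
        + δ * ∑ s', ρ s a s' * V₂ s'))
    (h₃ : ∀ s, V₃ s = Finset.univ.sup' Finset.univ_nonempty
      (fun a : A => (1 - δ) * (c s a + ∑ n, (t • lam₁ + (1 - t) • lam₂) n * f s a n)
        + δ * ∑ s', ρ s a s' * V₃ s')) :
    ∀ s, V₃ s ≤ t * V₁ s + (1 - t) * V₂ s := by
  set g : S → ℝ := fun s => V₃ s - (t * V₁ s + (1 - t) * V₂ s) with hg
  obtain ⟨s₀, -, hs₀⟩ := Finset.exists_mem_eq_sup' (Finset.univ_nonempty (α := S)) g
  set M : ℝ := Finset.univ.sup' Finset.univ_nonempty g with hM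
  have hle : ∀ s, g s ≤ M := fun s => Finset.le_sup' g (Finset.mem_univ s)
  -- pick optimal action for V₃ at s₀
  obtain ⟨a, -, ha⟩ := Finset.exists_mem_eq_sup' (Finset.univ_nonempty (α := A))
    (fun a : A => (1 - δ) * (c s₀ a + ∑ n, (t • lam₁ + (1 - t) • lam₂) n * f s₀ a n)
      + δ * ∑ s', ρ s₀ a s' * V₃ s')
  have hV₃ : V₃ s₀ = (1 - δ) * (c s₀ a + ∑ n, (t • lam₁ + (1 - t) • lam₂) n * f s₀ a n)
      + δ * ∑ s', ρ s₀ a s' * V₃ s' := by rw [h₃ s₀, ha]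
  have hV₁ : (1 - δ) * (c s₀ a + ∑ n, lam₁ n * f s₀ a n)
      + δ * ∑ s', ρ s₀ a s' * V₁ s' ≤ V₁ s₀ := by
    rw [h₁ s₀]
    exact Finset.le_sup' (fun a : A => (1 - δ) * (c s₀ a + ∑ n, lam₁ n * f s₀ a n)
      + δ * ∑ s', ρ s₀ a s' * V₁ s') (Finset.mem_univ a)
  have hV₂ : (1 - δ) * (c s₀ a + ∑ n, lam₂ n * f s₀ a n)
      + δ * ∑ s', ρ s₀ a s' * V₂ s' ≤ V₂ s₀ := by
    rw [h₂ s₀]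
    exact Finset.le_sup' (fun a : A => (1 - δ) * (c s₀ a + ∑ n, lam₂ n * f s₀ a n)
      + δ * ∑ s', ρ s₀ a s' * V₂ s') (Finset.mem_univ a)
  have hsumn : ∑ n, (t • lam₁ + (1 - t) • lam₂) n * f s₀ a n
      = t * ∑ n, lam₁ n * f s₀ a n + (1 - t) * ∑ n, lam₂ n * f s₀ a n := by
    simp only [Pi.add_apply, Pi.smul_apply, smul_eq_mul, add_mul,
      Finset.sum_add_distrib, Finset.mul_sum, mul_assoc]
  have hsumV : ∑ s', ρ s₀ a s' * V₃ s'
      ≤ ∑ s', ρ s₀ a s' * (t * V₁ s' + (1 - t) * V₂ s') + M := by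
    have : ∑ s', ρ s₀ a s' * V₃ s' - ∑ s', ρ s₀ a s' * (t * V₁ s' + (1 - t) * V₂ s')
        = ∑ s', ρ s₀ a s' * g s' := by
      rw [← Finset.sum_sub_distrib]; congr 1; ext s'; ring
    have hb : ∑ s', ρ s₀ a s' * g s' ≤ ∑ s', ρ s₀ a s' * M := by
      apply Finset.sum_le_sum
      intro s' _
      exact mul_le_mul_of_nonneg_left (hle s') (hρ0 s₀ a s')
    rw [← Finset.sum_mul, hρ1 s₀ a, one_mul] at hb
    linarith [this ▸ hb]
  have hsplit : ∑ s', ρ s₀ a s' * (t * V₁ s' + (1 - t) * V₂ s')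
      = t * ∑ s', ρ s₀ a s' * V₁ s' + (1 - t) * ∑ s', ρ s₀ a s' * V₂ s' := by
    simp only [mul_add, Finset.sum_add_distrib, Finset.mul_sum]
    congr 1 <;> (congr 1; ext s'; ring)
  have hgs₀ : g s₀ ≤ δ * M := by
    have h1δ : (0:ℝ) ≤ 1 - δ := by linarith
    simp only [hg]
    rw [hV₃, hsumn]
    nlinarith [mul_le_mul_of_nonneg_left hV₁ ht0,
      mul_le_mul_of_nonneg_left hV₂ (by linarith : (0:ℝ) ≤ 1 - t),
      mul_le_mul_of_nonneg_left hsumV hδ0]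
  have hM0 : M ≤ 0 := by
    have : M ≤ δ * M := hs₀ ▸ hgs₀
    nlinarith
  intro s
  have := hle s
  simp only [hg] at this
  linarith
end

section
/- Let S be a nonempty finite state space, A a nonempty finite action set, c : S → A → ℝ a stage cost, δ a discount factor with 0 ≤ δ < 1, and ρ : S → A → S → ℝ transition probabilities satisfying ρ s a s' ≥ 0 for all s, a, s' and ∑_{s' ∈ S} ρ s a s' = 1 for all s, a. Suppose V* : S → ℝ satisfies the Bellman equation V* s = min_{a ∈ A} [(1 − δ)·c s a + δ·∑_{s' ∈ S} ρ s a s' · V* s'] for all s, and suppose π : S → A is a stationary policy and W : S → ℝ satisfies W s = (1 − δ)·c s (π s) + δ·∑_{s' ∈ S} ρ s (π s) s' · W s' for all s. Then V* s ≤ W s for all s ∈ S. -/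
/-- The Bellman fixed point is a lower bound, at every state, on the value of
every stationary policy. -/
theorem stmt_10 (S A : Type*) [Fintype S] [Nonempty S] [Fintype A] [Nonempty A]
    (c : S → A → ℝ) (δ : ℝ) (hδ0 : 0 ≤ δ) (hδ1 : δ < 1)
    (ρ : S → A → S → ℝ)
    (hρ0 : ∀ s a s', 0 ≤ ρ s a s') (hρ1 : ∀ s a, ∑ s', ρ s a s' = 1)
    (Vstar : S → ℝ)
    (hVstar : ∀ s, Vstar s = Finset.univ.inf' Finset.univ_nonempty
      (fun a : A => (1 - δ) * c s a + δ * ∑ s', ρ s a s' * Vstar s'))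
    (π : S → A) (W : S → ℝ)
    (hW : ∀ s, W s = (1 - δ) * c s (π s) + δ * ∑ s', ρ s (π s) s' * W s') :
    ∀ s, Vstar s ≤ W s := by
  set D : S → ℝ := fun s => Vstar s - W s with hD
  obtain ⟨s0, -, hs0⟩ := Finset.exists_max_image (Finset.univ : Finset S) D
    Finset.univ_nonempty
  have key : ∀ s, D s ≤ δ * D s0 := by
    intro s
    have hle : Vstar s ≤ (1 - δ) * c s (π s) + δ * ∑ s', ρ s (π s) s' * Vstar s' := by
      rw [hVstar s]
      exact Finset.inf'_le _ (Finset.mem_univ (π s))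
    have : D s ≤ δ * ∑ s', ρ s (π s) s' * D s' := by
      have := hW s
      simp only [hD]
      calc Vstar s - W s
          ≤ ((1 - δ) * c s (π s) + δ * ∑ s', ρ s (π s) s' * Vstar s') -
            ((1 - δ) * c s (π s) + δ * ∑ s', ρ s (π s) s' * W s') := by
            rw [← hW s]; linarith
        _ = δ * ∑ s', ρ s (π s) s' * (Vstar s' - W s') := by
            rw [add_sub_add_left_eq_sub, ← mul_sub, ← Finset.sum_sub_distrib]
            congr 1
            apply Finset.sum_congr rfl
            intro x _; ring
    refine this.trans ?_
    have hsum : ∑ s', ρ s (π s) s' * D s' ≤ ∑ s', ρ s (π s) s' * D s0 := by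
      apply Finset.sum_le_sum
      intro i _
      exact mul_le_mul_of_nonneg_left (hs0 i (Finset.mem_univ i)) (hρ0 s (π s) i)
    have : ∑ s', ρ s (π s) s' * D s0 = D s0 := by
      rw [← Finset.sum_mul, hρ1, one_mul]
    nlinarith [hsum]
  have h0 : D s0 ≤ 0 := by
    have := key s0
    nlinarith
  intro s
  have h := (key s).trans (by nlinarith : δ * D s0 ≤ 0)
  have : Vstar s - W s ≤ 0 := h
  linarith
end

section
/- Let S be a nonempty finite state space, A a nonempty finite action set, c : S → A → ℝ a stage cost, δ a discount factor with 0 ≤ δ < 1, and ρ : S → A → S → ℝ transition probabilities satisfying ρ s a s' ≥ 0 for all s, a, s' and ∑_{s' ∈ S} ρ s a s' = 1 for all s, a. Suppose V* : S → ℝ satisfies V* s = min_{a ∈ A} [(1 − δ)·c s a + δ·∑_{s' ∈ S} ρ s a s' · V* s'] for all s, and suppose W : (S → A) → S → ℝ is a family of functions such that for every stationary policy π : S → A, W π s = (1 − δ)·c s (π s) + δ·∑_{s' ∈ S} ρ s (π s) s' · W π s' for all s. Then for every s ∈ S, V* s = min_{π : S → A} W π s, where the minimum is over the (finite) set of all stationary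 policies. -/
/-- Contraction lemma: if `f s ≤ δ * ∑ p s s' * f s'` for a substochastic
kernel `p` and `0 ≤ δ < 1`, then `f ≤ 0`. -/
lemma contraction_nonpos {S : Type*} [Fintype S] [Nonempty S]
    (δ : ℝ) (hδ0 : 0 ≤ δ) (hδ1 : δ < 1)
    (p : S → S → ℝ) (hp0 : ∀ s s', 0 ≤ p s s') (hp1 : ∀ s, ∑ s', p s s' = 1)
    (f : S → ℝ) (hf : ∀ s, f s ≤ δ * ∑ s', p s s' * f s') :
    ∀ s, f s ≤ 0 := by
  obtain ⟨s₀, -, hs₀⟩ := Finset.exists_mem_eq_sup' (Finset.univ_nonempty (α := S)) f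
  set M := Finset.univ.sup' Finset.univ_nonempty f with hM
  have hMmax : ∀ s, f s ≤ M := fun s => Finset.le_sup' f (Finset.mem_univ s)
  have key : M ≤ δ * M := by
    calc M = f s₀ := hs₀
    _ ≤ δ * ∑ s', p s₀ s' * f s' := hf s₀
    _ ≤ δ * ∑ s', p s₀ s' * M := by
        apply mul_le_mul_of_nonneg_left _ hδ0
        exact Finset.sum_le_sum fun s' _ =>
          mul_le_mul_of_nonneg_left (hMmax s') (hp0 s₀ s')
    _ = δ * M := by rw [← Finset.sum_mul, hp1 s₀, one_mul]
  have hM0 : M ≤ 0 := by nlinarith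
  exact fun s => (hMmax s).trans hM0

/-- Sufficiency of stationary deterministic policies: the Bellman fixed point
equals, at every state, the minimum over all stationary policies of their
policy value functions. -/
theorem stmt_11 (S A : Type*) [Fintype S] [Nonempty S] [DecidableEq S]
    [Fintype A] [Nonempty A]
    (c : S → A → ℝ) (δ : ℝ) (hδ0 : 0 ≤ δ) (hδ1 : δ < 1)
    (ρ : S → A → S → ℝ)
    (hρ0 : ∀ s a s', 0 ≤ ρ s a s') (hρ1 : ∀ s a, ∑ s', ρ s a s' = 1)
    (Vstar : S → ℝ)
    (hVstar : ∀ s, Vstar s = Finset.univ.inf' Finset.univ_nonempty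
      (fun a : A => (1 - δ) * c s a + δ * ∑ s', ρ s a s' * Vstar s'))
    (W : (S → A) → S → ℝ)
    (hW : ∀ (π : S → A) (s : S),
      W π s = (1 - δ) * c s (π s) + δ * ∑ s', ρ s (π s) s' * W π s') :
    ∀ s, Vstar s = Finset.univ.inf' Finset.univ_nonempty
      (fun π : S → A => W π s) := by
  -- (1) V* ≤ W π for every π
  have hle : ∀ (π : S → A) (s : S), Vstar s ≤ W π s := by
    intro π
    have h : ∀ s, Vstar s - W π s ≤
        δ * ∑ s', ρ s (π s) s' * (Vstar s' - W π s') := by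
      intro s
      have h1 : Vstar s ≤ (1 - δ) * c s (π s) + δ * ∑ s', ρ s (π s) s' * Vstar s' := by
        rw [hVstar s]
        exact Finset.inf'_le _ (Finset.mem_univ (π s))
      have h2 := hW π s
      have : δ * ∑ s', ρ s (π s) s' * (Vstar s' - W π s')
          = δ * ∑ s', ρ s (π s) s' * Vstar s'
            - δ * ∑ s', ρ s (π s) s' * W π s' := by
        rw [← mul_sub, ← Finset.sum_sub_distrib]
        congr 1; apply Finset.sum_congr rfl; intro s' _; ring
      rw [this]; linarith
    intro s
    have := contraction_nonpos δ hδ0 hδ1 (fun s => ρ s (π s)) (fun s => hρ0 s (π s))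
      (fun s => hρ1 s (π s)) (fun s => Vstar s - W π s) h s
    linarith
  -- (2) greedy policy achieves V*
  have hgreedy : ∀ s : S, ∃ a : A, Vstar s =
      (1 - δ) * c s a + δ * ∑ s', ρ s a s' * Vstar s' := by
    intro s
    obtain ⟨a, -, ha⟩ := Finset.exists_mem_eq_inf' (Finset.univ_nonempty (α := A))
      (fun a : A => (1 - δ) * c s a + δ * ∑ s', ρ s a s' * Vstar s')
    exact ⟨a, (hVstar s).trans ha⟩
  choose πg hπg using hgreedy
  have hWV : ∀ s, W πg s = Vstar s := by
    have h : ∀ s, W πg s - Vstar s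
        = δ * ∑ s', ρ s (πg s) s' * (W πg s' - Vstar s') := by
      intro s
      have h1 := hπg s
      have h2 := hW πg s
      have : δ * ∑ s', ρ s (πg s) s' * (W πg s' - Vstar s')
          = δ * ∑ s', ρ s (πg s) s' * W πg s'
            - δ * ∑ s', ρ s (πg s) s' * Vstar s' := by
        rw [← mul_sub, ← Finset.sum_sub_distrib]
        congr 1; apply Finset.sum_congr rfl; intro s' _; ring
      rw [this]; linarith
    intro s
    have hle1 := contraction_nonpos δ hδ0 hδ1 (fun s => ρ s (πg s))
      (fun s => hρ0 s (πg s)) (fun s => hρ1 s (πg s))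
      (fun s => W πg s - Vstar s) (fun s => le_of_eq (h s)) s
    have hle2 := contraction_nonpos δ hδ0 hδ1 (fun s => ρ s (πg s))
      (fun s => hρ0 s (πg s)) (fun s => hρ1 s (πg s))
      (fun s => Vstar s - W πg s) (fun s => by
        show Vstar s - W πg s ≤ _
        have := h s
        have e : δ * ∑ s', ρ s (πg s) s' * (Vstar s' - W πg s')
            = - (δ * ∑ s', ρ s (πg s) s' * (W πg s' - Vstar s')) := by
          rw [← mul_neg, ← Finset.sum_neg_distrib]
          congr 1; apply Finset.sum_congr rfl; intro s' _; ring
        rw [e]; linarith) s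
    linarith
  intro s
  refine le_antisymm ?_ ?_
  · exact Finset.le_inf' _ _ fun π _ => hle π s
  · calc Finset.univ.inf' Finset.univ_nonempty (fun π : S → A => W π s)
        ≤ W πg s := Finset.inf'_le _ (Finset.mem_univ πg)
    _ = Vstar s := hWV s
end

section
/- Let S be a nonempty finite state space, A a nonempty finite action set, c : S → A → ℝ a stage cost, δ a discount factor with 0 ≤ δ < 1, and ρ : S → A → S → ℝ transition probabilities satisfying ρ s a s' ≥ 0 for all s, a, s' and ∑_{s' ∈ S} ρ s a s' = 1 for all s, a. Suppose W : (S → A) → S → ℝ is a family of functions such that for every stationary policy π : S → A, W π s = (1 − δ)·c s (π s) + δ·∑_{s' ∈ S} ρ s (π s) s' · W π s' for all s. If a stationary policy π̂ : S → A satisfies ∑_{s ∈ S} W π̂ s ≤ ∑_{s ∈ S} W π s for every stationary policy π : S → A, then W π̂ s ≤ W π s for every stationary policy π and every state s ∈ S. -/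
/-- Contraction-style comparison lemma: if a value function `V` dominates the
one-step Bellman update of policy `π'`, then it dominates `W π'` everywhere. -/
lemma key_lemma (S A : Type*) [Fintype S] [Nonempty S]
    (c : S → A → ℝ) (δ : ℝ) (hδ0 : 0 ≤ δ) (hδ1 : δ < 1)
    (ρ : S → A → S → ℝ)
    (hρ0 : ∀ s a s', 0 ≤ ρ s a s') (hρ1 : ∀ s a, ∑ s', ρ s a s' = 1)
    (W : (S → A) → S → ℝ)
    (hW : ∀ (π : S → A) (s : S),
      W π s = (1 - δ) * c s (π s) + δ * ∑ s', ρ s (π s) s' * W π s')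
    (π' : S → A) (V : S → ℝ)
    (hV : ∀ s, (1 - δ) * c s (π' s) + δ * ∑ s', ρ s (π' s) s' * V s' ≤ V s) :
    ∀ s, W π' s ≤ V s := by
  set g : S → ℝ := fun s => W π' s - V s with hg
  obtain ⟨t, -, ht⟩ := Finset.exists_max_image (Finset.univ : Finset S) g
    Finset.univ_nonempty
  have htmax : ∀ s, g s ≤ g t := fun s => ht s (Finset.mem_univ s)
  have hM : g t ≤ 0 := by
    by_contra h
    push_neg at h
    have hbound : g t ≤ δ * g t := by
      have h1 : g t = W π' t - V t := rfl
      have h2 : W π' t - V t ≤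
          (δ * ∑ s', ρ t (π' t) s' * W π' s') - δ * ∑ s', ρ t (π' t) s' * V s' := by
        have := hV t
        rw [hW π' t]
        linarith
      have h3 : (δ * ∑ s', ρ t (π' t) s' * W π' s') - δ * ∑ s', ρ t (π' t) s' * V s'
          = δ * ∑ s', ρ t (π' t) s' * g s' := by
        rw [← mul_sub, ← Finset.sum_sub_distrib]
        congr 1
        apply Finset.sum_congr rfl
        intro s _
        ring
      have h4 : ∑ s', ρ t (π' t) s' * g s' ≤ ∑ s', ρ t (π' t) s' * g t := by
        apply Finset.sum_le_sum
        intro s _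
        exact mul_le_mul_of_nonneg_left (htmax s) (hρ0 _ _ _)
      have h5 : ∑ s', ρ t (π' t) s' * g t = g t := by
        rw [← Finset.sum_mul, hρ1, one_mul]
      calc g t = W π' t - V t := h1
        _ ≤ δ * ∑ s', ρ t (π' t) s' * g s' := by rw [← h3]; exact h2
        _ ≤ δ * ∑ s', ρ t (π' t) s' * g t := by
            exact mul_le_mul_of_nonneg_left h4 hδ0
        _ = δ * g t := by rw [h5]
    nlinarith
  intro s
  have := le_trans (htmax s) hM
  simpa [hg] using this

/-- A stationary policy minimizing the policy value summed uniformly over all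
initial states also minimizes the policy value at every individual state. -/
theorem stmt_12 (S A : Type*) [Fintype S] [Nonempty S] [Fintype A] [Nonempty A]
    (c : S → A → ℝ) (δ : ℝ) (hδ0 : 0 ≤ δ) (hδ1 : δ < 1)
    (ρ : S → A → S → ℝ)
    (hρ0 : ∀ s a s', 0 ≤ ρ s a s') (hρ1 : ∀ s a, ∑ s', ρ s a s' = 1)
    (W : (S → A) → S → ℝ)
    (hW : ∀ (π : S → A) (s : S),
      W π s = (1 - δ) * c s (π s) + δ * ∑ s', ρ s (π s) s' * W π s')
    (πhat : S → A)
    (hπhat : ∀ π : S → A, ∑ s, W πhat s ≤ ∑ s, W π s) :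
    ∀ (π : S → A) (s : S), W πhat s ≤ W π s := by
  intro π s0
  by_contra h
  push_neg at h
  -- h : W π s0 < W πhat s0
  classical
  set V : S → ℝ := fun s => min (W πhat s) (W π s) with hVdef
  set π' : S → A := fun s => if W π s < W πhat s then π s else πhat s with hπ'def
  have hV : ∀ s, (1 - δ) * c s (π' s) + δ * ∑ s', ρ s (π' s) s' * V s' ≤ V s := by
    intro s
    have hsum : ∀ a, ∑ s', ρ s a s' * V s' ≤ ∑ s', ρ s a s' * W πhat s' := by
      intro a
      apply Finset.sum_le_sum
      intro s' _
      exact mul_le_mul_of_nonneg_left (min_le_left _ _) (hρ0 _ _ _)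
    have hsum' : ∀ a, ∑ s', ρ s a s' * V s' ≤ ∑ s', ρ s a s' * W π s' := by
      intro a
      apply Finset.sum_le_sum
      intro s' _
      exact mul_le_mul_of_nonneg_left (min_le_right _ _) (hρ0 _ _ _)
    by_cases hc : W π s < W πhat s
    · have : π' s = π s := by simp [hπ'def, hc]
      rw [this]
      have h1 : (1 - δ) * c s (π s) + δ * ∑ s', ρ s (π s) s' * V s'
          ≤ (1 - δ) * c s (π s) + δ * ∑ s', ρ s (π s) s' * W π s' := by
        have := hsum' (π s)
        nlinarith [mul_le_mul_of_nonneg_left (hsum' (π s)) hδ0]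
      have h2 : V s = W π s := min_eq_right (le_of_lt hc)
      rw [h2, hW π s] at *
      linarith
    · have : π' s = πhat s := by simp [hπ'def, hc]
      rw [this]
      have h1 : (1 - δ) * c s (πhat s) + δ * ∑ s', ρ s (πhat s) s' * V s'
          ≤ (1 - δ) * c s (πhat s) + δ * ∑ s', ρ s (πhat s) s' * W πhat s' := by
        nlinarith [mul_le_mul_of_nonneg_left (hsum (πhat s)) hδ0]
      push_neg at hc
      have h2 : V s = W πhat s := min_eq_left hc
      rw [h2, hW πhat s] at *
      linarith
  have hle : ∀ s, W π' s ≤ V s :=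
    key_lemma S A c δ hδ0 hδ1 ρ hρ0 hρ1 W hW π' V hV
  have hsumlt : ∑ s, W π' s < ∑ s, W πhat s := by
    calc ∑ s, W π' s ≤ ∑ s, V s := Finset.sum_le_sum (fun s _ => hle s)
      _ < ∑ s, W πhat s := by
        apply Finset.sum_lt_sum (fun s _ => min_le_left _ _)
        exact ⟨s0, Finset.mem_univ s0, by
          show min (W πhat s0) (W π s0) < W πhat s0
          rw [min_eq_right (le_of_lt h)]
          exact h⟩
  exact absurd (hπhat π') (not_le.mpr hsumlt)
end
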